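/- For T = (ab)^{m+1} c (ab)^m and T' = T with its first character deleted, i.e., T' = b(ab)^m c (ab)^m, the CDAWG edge counts satisfy e(T) = 2m+3 and e(T') = 4m+2, hence e(T') − e(T) = e(T) − 4. -/

import Mathlib

/-- 1-indexed ending positions of occurrences of `u` in `T`:
`i ∈ EndPos u T` iff `T[i-|u|+1..i] = u`. -/
def EndPos {α : Type*} (u T : List α) : Set ℕ :=
  {i | u.length ≤ i ∧ i ≤ T.length ∧ u <:+ T.take i}

/-- 0-indexed beginning positions of occurrences of `u` in `T`. -/
def BegPos {α : Type*} (u T : List α) : Set ℕ :=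
  {i | i + u.length ≤ T.length ∧ u <+: T.drop i}

/-- `u` is left-maximal in `T`: `u` is a prefix of `T`, or two distinct
characters immediately precede occurrences of `u` in `T`. -/
def LeftMaximal {α : Type*} (u T : List α) : Prop :=
  u <+: T ∨ ∃ c d : α, c ≠ d ∧ (c :: u) <:+: T ∧ (d :: u) <:+: T

/-- `u` is right-maximal in `T`: `u` is a suffix of `T`, or two distinct
characters immediately follow occurrences of `u` in `T`. -/
def RightMaximal {α : Type*} (u T : List α) : Prop :=
  u <:+ T ∨ ∃ c d : α, c ≠ d ∧ (u ++ [c]) <:+: T ∧ (u ++ [d]) <:+: T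

/-- `u` is maximal in `T` iff it is both left-maximal and right-maximal. -/
def MaximalSubstr {α : Type*} (u T : List α) : Prop :=
  LeftMaximal u T ∧ RightMaximal u T

/-- Out-degree of node `x` in `CDAWG(T)`: the number of distinct characters `c`
with `xc` a substring of `T` (and `0` for the sink `T` itself). -/
noncomputable def D {α : Type*} [DecidableEq α] (T x : List α) : ℕ :=
  if x = T then 0 else (T.toFinset.filter (fun c => (x ++ [c]) <:+: T)).card

open scoped Classical in
/-- Number of edges of `CDAWG(T)`: the total out-degree over all maximal
substrings of `T`. -/
noncomputable def cdawgSize {α : Type*} [DecidableEq α] (T : List α) : ℕ :=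
  ∑ x ∈ T.sublists.toFinset.filter (fun x => x <:+: T ∧ MaximalSubstr x T), D T x

/-- `(ab)^k`, the string `ab` repeated `k` times. -/
def abPow {α : Type*} (a b : α) (k : ℕ) : List α :=
  (List.replicate k [a, b]).flatten

open List

namespace Stmt17

variable {α : Type*}

theorem abPow_succ (a b : α) (k : ℕ) : abPow a b (k+1) = a :: b :: abPow a b k := by
  simp [abPow, List.replicate_succ]

theorem abPow_zero (a b : α) : abPow a b 0 = [] := rfl

theorem abPow_one (a b : α) : abPow a b 1 = [a, b] := rfl

theorem abPow_add (a b : α) (j k : ℕ) :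
    abPow a b (j + k) = abPow a b j ++ abPow a b k := by
  show (List.replicate (j+k) [a,b]).flatten = (List.replicate j [a,b]).flatten ++ (List.replicate k [a,b]).flatten
  rw [List.replicate_add, List.flatten_append]

theorem abPow_length (a b : α) (k : ℕ) : (abPow a b k).length = 2 * k := by
  induction k with
  | zero => rfl
  | succ k ih => rw [abPow_succ]; simp only [List.length_cons, ih]; omega

theorem mem_abPow {a b x : α} {k : ℕ} (h : x ∈ abPow a b k) : x = a ∨ x = b := by
  induction k with
  | zero => simp [abPow_zero] at h
  | succ k ih =>
    rw [abPow_succ] at h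
    simp only [List.mem_cons] at h
    rcases h with h | h | h
    · exact Or.inl h
    · exact Or.inr h
    · exact ih h

theorem abPow_prefix (a b : α) {j k : ℕ} (h : j ≤ k) : abPow a b j <+: abPow a b k := by
  obtain ⟨d, rfl⟩ := Nat.exists_eq_add_of_le h
  rw [abPow_add]; exact List.prefix_append _ _

theorem abPow_suffix (a b : α) {j k : ℕ} (h : j ≤ k) : abPow a b j <:+ abPow a b k := by
  obtain ⟨d, rfl⟩ := Nat.exists_eq_add_of_le h
  rw [Nat.add_comm, abPow_add]; exact List.suffix_append _ _

theorem abPow_concat (a b : α) (k : ℕ) : abPow a b (k+1) = abPow a b k ++ [a, b] := by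
  rw [abPow_add, abPow_one]

theorem head?_abPow (a b : α) {k : ℕ} (h : 1 ≤ k) : (abPow a b k).head? = some a := by
  obtain ⟨d, rfl⟩ := Nat.exists_eq_add_of_le h
  rw [Nat.add_comm, abPow_succ]; rfl

theorem getLast?_abPow (a b : α) {k : ℕ} (h : 1 ≤ k) : (abPow a b k).getLast? = some b := by
  obtain ⟨d, rfl⟩ := Nat.exists_eq_add_of_le h
  rw [Nat.add_comm, abPow_concat]
  have h2 : abPow a b d ++ [a, b] = (abPow a b d ++ [a]) ++ [b] := by simp
  rw [h2, List.getLast?_concat]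

theorem abPow_ne_nil (a b : α) {k : ℕ} (h : 1 ≤ k) : abPow a b k ≠ [] := by
  intro hn
  have h2 := abPow_length a b k
  rw [hn] at h2
  simp only [List.length_nil] at h2; omega

/-- Decomposing a length-2 infix of an append. -/
theorem pair_infix_append {x y : α} {u v : List α} (h : [x, y] <:+: u ++ v) :
    [x, y] <:+: u ∨ [x, y] <:+: v ∨ (∃ u', u = u' ++ [x]) ∧ (∃ v', v = y :: v') := by
  induction u with
  | nil => exact Or.inr (Or.inl (by simpa using h))
  | cons z u ih =>
    rw [List.cons_append, List.infix_cons_iff] at h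
    rcases h with hp | h
    · rw [List.cons_prefix_cons] at hp
      obtain ⟨rfl, hp⟩ := hp
      match u, hp with
      | [], hp =>
        obtain ⟨t, ht⟩ := hp
        exact Or.inr (Or.inr ⟨⟨[], rfl⟩, ⟨t, ht.symm⟩⟩)
      | w :: u0, hp =>
        rw [List.cons_append, List.cons_prefix_cons] at hp
        obtain ⟨rfl, _⟩ := hp
        exact Or.inl ⟨[], u0, rfl⟩
    · rcases ih h with h1 | h2 | h3
      · exact Or.inl (h1.trans (List.suffix_cons z u).isInfix)
      · exact Or.inr (Or.inl h2)
      · rcases h3 with ⟨⟨u', rfl⟩, hv⟩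
        exact Or.inr (Or.inr ⟨⟨z :: u', rfl⟩, hv⟩)

/-- Length-2 infixes of `abPow a b k` are `[a,b]` or `[b,a]`. -/
theorem pair_abPow {a b x y : α} {k : ℕ} (h : [x, y] <:+: abPow a b k) :
    (x = a ∧ y = b) ∨ (x = b ∧ y = a) := by
  induction k with
  | zero => rw [abPow_zero, List.infix_nil] at h; simp at h
  | succ k ih =>
    rw [abPow_succ, List.infix_cons_iff] at h
    rcases h with hp | h
    · rw [List.cons_prefix_cons] at hp
      obtain ⟨rfl, hp⟩ := hp
      rw [List.cons_prefix_cons] at hp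
      exact Or.inl ⟨rfl, hp.1⟩
    · rw [List.infix_cons_iff] at h
      rcases h with hp | h
      · match k, hp with
        | 0, hp =>
          rw [abPow_zero] at hp
          rcases hp with ⟨t, ht⟩
          simp at ht
        | k + 1, hp =>
          rw [abPow_succ, List.cons_prefix_cons] at hp
          obtain ⟨rfl, hp⟩ := hp
          rw [List.cons_prefix_cons] at hp
          exact Or.inr ⟨rfl, hp.1⟩
      · exact ih h


variable {α : Type*}

/-- A `c`-free prefix of `A ++ [c] ++ B` is a prefix of `A`. -/
theorem prefix_window {c : α} {u A B : List α} (h : u <+: A ++ [c] ++ B) (hc : c ∉ u) :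
    u <+: A := by
  induction A generalizing u with
  | nil =>
    rw [List.nil_append, List.cons_append, List.prefix_cons_iff] at h
    rcases h with rfl | ⟨t, rfl, _⟩
    · exact List.nil_prefix
    · exact absurd List.mem_cons_self hc
  | cons z A ih =>
    rw [List.cons_append, List.cons_append, List.prefix_cons_iff] at h
    rcases h with rfl | ⟨t, rfl, ht⟩
    · exact List.nil_prefix
    · have hct : c ∉ t := fun hm => hc (List.mem_cons_of_mem _ hm)
      have := ih (by simpa using ht) hct
      rw [List.cons_prefix_cons]
      exact ⟨rfl, this⟩

/-- A `c`-free infix of `A ++ [c] ++ B` is an infix of `A` or of `B`. -/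
theorem infix_window {c : α} {u A B : List α} (h : u <:+: A ++ [c] ++ B) (hc : c ∉ u) :
    u <:+: A ∨ u <:+: B := by
  induction A generalizing u with
  | nil =>
    rw [List.nil_append, List.cons_append, List.infix_cons_iff] at h
    rcases h with hp | h
    · rw [List.prefix_cons_iff] at hp
      rcases hp with rfl | ⟨t, rfl, _⟩
      · exact Or.inl List.nil_infix
      · exact absurd List.mem_cons_self hc
    · exact Or.inr h
  | cons z A ih =>
    rw [List.cons_append, List.cons_append, List.infix_cons_iff] at h
    rcases h with hp | h
    · exact Or.inl (prefix_window (u := u) (A := z :: A) (B := B) (c := c)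
        (by simpa using hp) hc).isInfix
    · rcases ih (by simpa using h) hc with h1 | h2
      · exact Or.inl (h1.trans (List.suffix_cons z A).isInfix)
      · exact Or.inr h2

/-- First-occurrence decomposition. -/
theorem exists_first_mem {c : α} {u : List α} (h : c ∈ u) :
    ∃ p q, u = p ++ c :: q ∧ c ∉ p := by
  induction u with
  | nil => simp at h
  | cons z u ih =>
    by_cases hz : z = c
    · exact ⟨[], u, by simp [hz], by simp⟩
    · rcases ih (by rcases List.mem_cons.1 h with h | h; exact absurd h.symm hz; exact h) with
        ⟨p, q, rfl, hp⟩
      refine ⟨z :: p, q, rfl, ?_⟩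
      intro hm
      rcases List.mem_cons.1 hm with h' | h'
      · exact hz h'.symm
      · exact hp h'

theorem cfree_eq {c : α} : ∀ {s₁ s₂ r₁ r₂ : List α},
    s₁ ++ c :: r₁ = s₂ ++ c :: r₂ → c ∉ s₁ → c ∉ s₂ → s₁ = s₂ ∧ r₁ = r₂ := by
  intro s₁
  induction s₁ with
  | nil =>
    intro s₂ r₁ r₂ h h1 h2
    match s₂, h with
    | [], h => simp at h; exact ⟨rfl, h⟩
    | z :: s₂, h =>
      simp only [List.nil_append, List.cons_append, List.cons.injEq] at h
      exact absurd (h.1 ▸ (List.mem_cons_self : z ∈ z :: s₂)) h2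
  | cons z s₁ ih =>
    intro s₂ r₁ r₂ h h1 h2
    match s₂, h with
    | [], h =>
      simp only [List.nil_append, List.cons_append, List.cons.injEq] at h
      exact absurd (h.1.symm ▸ (List.mem_cons_self : z ∈ z :: s₁)) h1
    | w :: s₂, h =>
      simp only [List.cons_append, List.cons.injEq] at h
      obtain ⟨rfl, h⟩ := h
      have := ih h (fun hm => h1 (List.mem_cons_of_mem _ hm))
        (fun hm => h2 (List.mem_cons_of_mem _ hm))
      exact ⟨by rw [this.1], this.2⟩

/-- If `c` occurs exactly once in `T` and `c ∈ u`, occurrences of `u` in `T` are unique. -/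
theorem unique_occ {c : α} [DecidableEq α] {T u s₁ t₁ s₂ t₂ : List α}
    (hT : T.count c = 1) (hc : c ∈ u)
    (h1 : T = s₁ ++ u ++ t₁) (h2 : T = s₂ ++ u ++ t₂) : s₁ = s₂ ∧ t₁ = t₂ := by
  have hcnt : ∀ s t : List α, T = s ++ u ++ t → c ∉ s ∧ c ∉ t := by
    intro s t h
    have hu : 1 ≤ u.count c := List.count_pos_iff.2 hc
    have : T.count c = s.count c + u.count c + t.count c := by
      rw [h, List.count_append, List.count_append]
    rw [hT] at this
    constructor <;> rw [← List.count_eq_zero] <;> omega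
  obtain ⟨hs₁, ht₁⟩ := hcnt _ _ h1
  obtain ⟨hs₂, ht₂⟩ := hcnt _ _ h2
  obtain ⟨p, q, rfl, hp⟩ := exists_first_mem hc
  rw [h1] at h2
  have h2' : (s₁ ++ p) ++ c :: (q ++ t₁) = (s₂ ++ p) ++ c :: (q ++ t₂) := by
    simpa using h2
  have hcp1 : c ∉ s₁ ++ p := by simp [List.mem_append, hs₁, hp]
  have hcp2 : c ∉ s₂ ++ p := by simp [List.mem_append, hs₂, hp]
  obtain ⟨he, he2⟩ := cfree_eq h2' hcp1 hcp2
  have hs : s₁ = s₂ := List.append_cancel_right he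
  have ht : t₁ = t₂ := List.append_cancel_left he2
  exact ⟨hs, ht⟩


/-- A nonempty infix of `abPow a b k` that starts with `a` and ends with `b`
is `abPow a b j` for some `1 ≤ j ≤ k`. -/
theorem infix_abPow_form {a b : α} (hab : a ≠ b) : ∀ {k : ℕ} {u : List α},
    u <:+: abPow a b k → u ≠ [] → u.head? = some a → u.getLast? = some b →
    ∃ j, 1 ≤ j ∧ j ≤ k ∧ u = abPow a b j := by
  intro k
  induction k with
  | zero =>
    intro u h hne _ _
    rw [abPow_zero, List.infix_nil] at h
    exact absurd h hne
  | succ k ih =>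
    intro u h hne hh hl
    rw [abPow_succ, List.infix_cons_iff] at h
    rcases h with hp | h
    · -- u <+: a :: b :: abPow a b k
      rw [List.prefix_cons_iff] at hp
      rcases hp with rfl | ⟨t, rfl, ht⟩
      · exact absurd rfl hne
      · -- u = a :: t, t <+: b :: abPow a b k
        rw [List.prefix_cons_iff] at ht
        rcases ht with rfl | ⟨t', rfl, ht'⟩
        · -- u = [a]: getLast? = some a ≠ some b
          simp only [List.getLast?_singleton, Option.some.injEq] at hl
          exact absurd hl hab
        · -- u = a :: b :: t', t' <+: abPow a b k
          rcases eq_or_ne t' [] with rfl | hne'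
          · exact ⟨1, le_refl _, by omega, by rw [abPow_one]⟩
          · have hh' : t'.head? = some a := by
              have h1 : (abPow a b k).head? = some a := by
                rcases Nat.eq_zero_or_pos k with rfl | hk
                · rw [abPow_zero, List.prefix_nil] at ht'; exact absurd ht' hne'
                · exact head?_abPow a b hk
              rcases ht' with ⟨r, hr⟩
              rw [← hr, List.head?_append, List.head?_eq_head hne'] at h1
              rw [List.head?_eq_head hne']
              simpa using congrArg some h1
            have hl' : t'.getLast? = some b := by
              rw [show a :: b :: t' = [a, b] ++ t' from rfl, List.getLast?_append] at hl
              rcases t' with _ | ⟨z, t''⟩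
              · exact absurd rfl hne'
              · cases hg : (z :: t'').getLast? with
                | none => simp at hg
                | some w => rw [hg] at hl; simpa using hl
            obtain ⟨j, hj1, hj2, rfl⟩ := ih ht'.isInfix hne' hh' hl'
            exact ⟨j + 1, by omega, by omega, by rw [abPow_succ]⟩
    · -- u <:+: b :: abPow a b k
      rw [List.infix_cons_iff] at h
      rcases h with hp | h
      · rcases u with _ | ⟨z, u'⟩
        · exact absurd rfl hne
        · rw [List.cons_prefix_cons] at hp
          simp only [List.head?_cons, Option.some.injEq] at hh
          exact absurd (hh ▸ hp.1) hab
      · obtain ⟨j, hj1, hj2, rfl⟩ := ih h hne hh hl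
        exact ⟨j, hj1, by omega, rfl⟩

/-- With a unique `c` in `T` and `c ∈ u`, right extensions of `u` are unique. -/
theorem right_ext_unique {c : α} [DecidableEq α] {T u : List α} {x y : α}
    (hT : T.count c = 1) (hc : c ∈ u)
    (hx : u ++ [x] <:+: T) (hy : u ++ [y] <:+: T) : x = y := by
  obtain ⟨s₁, t₁, h1⟩ := hx
  obtain ⟨s₂, t₂, h2⟩ := hy
  have h1' : T = s₁ ++ u ++ ([x] ++ t₁) := by rw [← h1]; simp
  have h2' : T = s₂ ++ u ++ ([y] ++ t₂) := by rw [← h2]; simp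
  have h := (unique_occ hT hc h1' h2').2
  exact (by simpa using h : x = y ∧ t₁ = t₂).1

/-- With a unique `c` in `T` and `c ∈ u`, left extensions of `u` are unique. -/
theorem left_ext_unique {c : α} [DecidableEq α] {T u : List α} {x y : α}
    (hT : T.count c = 1) (hc : c ∈ u)
    (hx : x :: u <:+: T) (hy : y :: u <:+: T) : x = y := by
  obtain ⟨s₁, t₁, h1⟩ := hx
  obtain ⟨s₂, t₂, h2⟩ := hy
  have h1' : T = (s₁ ++ [x]) ++ u ++ t₁ := by rw [← h1]; simp
  have h2' : T = (s₂ ++ [y]) ++ u ++ t₂ := by rw [← h2]; simp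
  have h := (unique_occ hT hc h1' h2').1
  have : (s₁ ++ [x]).getLast? = some x := List.getLast?_concat
  rw [h, List.getLast?_concat] at this
  exact (Option.some.injEq _ _ ▸ this).symm

theorem pair_last {u l : List α} {z y : α} (hu : u.getLast? = some z)
    (h : u ++ [y] <:+: l) : [z, y] <:+: l := by
  obtain ⟨u', rfl⟩ := List.getLast?_eq_some_iff.1 hu
  have : [z, y] <:+: (u' ++ [z]) ++ [y] := by
    refine ⟨u', [], by simp⟩
  exact this.trans h

theorem pair_head {u l : List α} {x z : α} (hu : u.head? = some z)
    (h : x :: u <:+: l) : [x, z] <:+: l := by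
  obtain ⟨u', rfl⟩ := List.head?_eq_some_iff.1 hu
  have : [x, z] <:+: x :: z :: u' := ⟨[], u', by simp⟩
  exact this.trans h

section Main

variable [DecidableEq α] {a b c : α} {m : ℕ}

theorem count_c_abPow (hbc : b ≠ c) (hac : a ≠ c) (k : ℕ) :
    (abPow a b k).count c = 0 := by
  rw [List.count_eq_zero]
  intro h
  rcases mem_abPow h with h | h
  · exact hac h.symm
  · exact hbc h.symm

theorem countT (hbc : b ≠ c) (hac : a ≠ c) :
    (abPow a b (m+1) ++ [c] ++ abPow a b m).count c = 1 := by
  rw [List.count_append, List.count_append, count_c_abPow hbc hac,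
    count_c_abPow hbc hac]
  simp

theorem countT' (hbc : b ≠ c) (hac : a ≠ c) :
    ((b :: abPow a b m) ++ [c] ++ abPow a b m).count c = 1 := by
  rw [List.count_append, List.count_append]
  have h1 : (b :: abPow a b m).count c = 0 := by
    rw [List.count_cons]
    rw [count_c_abPow hbc hac]
    simp [hbc]
  rw [h1, count_c_abPow hbc hac]
  simp

/-- The length-2 factors of `T`. -/
theorem pairT (hm : 1 ≤ m) {x y : α} :
    [x, y] <:+: abPow a b (m+1) ++ [c] ++ abPow a b m →
    (x = a ∧ y = b) ∨ (x = b ∧ y = a) ∨ (x = b ∧ y = c) ∨ (x = c ∧ y = a) := by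
  intro h
  rcases pair_infix_append h with h1 | h2 | h3
  · -- infix of abPow a b (m+1) ++ [c]
    rcases pair_infix_append h1 with g1 | g2 | g3
    · rcases pair_abPow g1 with g | g
      · exact Or.inl g
      · exact Or.inr (Or.inl g)
    · have := g2.length_le; simp at this
    · obtain ⟨⟨u', hu⟩, ⟨v', hv⟩⟩ := g3
      have hx : x = b := by
        have h1 := getLast?_abPow a b (k := m+1) (by omega)
        rw [hu, List.getLast?_concat] at h1
        exact Option.some_injective _ h1
      have hy : y = c := (Option.some_injective _ (by simpa using congrArg List.head? hv)).symm
      exact Or.inr (Or.inr (Or.inl ⟨hx, hy⟩))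
  · exact (pair_abPow h2).elim Or.inl (Or.inr ∘ Or.inl)
  · obtain ⟨⟨u', hu⟩, ⟨v', hv⟩⟩ := h3
    have hx : x = c := by
      have : (abPow a b (m+1) ++ [c]).getLast? = some c := List.getLast?_concat
      rw [hu, List.getLast?_concat] at this
      exact Option.some_injective _ this
    have hy : y = a := by
      have h1 := head?_abPow a b (k := m) (by omega)
      rw [hv] at h1
      exact (by simpa using h1 : y = a)
    exact Or.inr (Or.inr (Or.inr ⟨hx, hy⟩))

end Main

section Main2

set_option linter.unusedSectionVars false

variable [DecidableEq α] {a b c : α} {m : ℕ}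

/-- If the pairs of `W` are among `ab, ba, bc, ca`, a nonempty left-maximal
substring is a prefix or starts with `a`. -/
theorem leftMax_head {W u : List α} (hab : a ≠ b) (hbc : b ≠ c) (hac : a ≠ c)
    (hpair : ∀ x y : α, [x, y] <:+: W →
      (x = a ∧ y = b) ∨ (x = b ∧ y = a) ∨ (x = b ∧ y = c) ∨ (x = c ∧ y = a))
    (hu : u ≠ []) (hL : LeftMaximal u W) : u <+: W ∨ u.head? = some a := by
  rcases hL with hp | ⟨x, y, hxy, hx, hy⟩
  · exact Or.inl hp
  · right
    obtain ⟨z, u₂, rfl⟩ := List.exists_cons_of_ne_nil hu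
    have hz : (z :: u₂).head? = some z := rfl
    have h1 := hpair x z (pair_head hz hx)
    have h2 := hpair y z (pair_head hz hy)
    rw [hz]
    rcases h1 with ⟨e1, f1⟩ | ⟨e1, f1⟩ | ⟨e1, f1⟩ | ⟨e1, f1⟩ <;>
      rcases h2 with ⟨e2, f2⟩ | ⟨e2, f2⟩ | ⟨e2, f2⟩ | ⟨e2, f2⟩ <;>
      subst_vars <;> simp_all

/-- Dually, a nonempty right-maximal substring is a suffix or ends with `b`. -/
theorem rightMax_last {W u : List α} (hab : a ≠ b) (hbc : b ≠ c) (hac : a ≠ c)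
    (hpair : ∀ x y : α, [x, y] <:+: W →
      (x = a ∧ y = b) ∨ (x = b ∧ y = a) ∨ (x = b ∧ y = c) ∨ (x = c ∧ y = a))
    (hu : u ≠ []) (hR : RightMaximal u W) : u <:+ W ∨ u.getLast? = some b := by
  rcases hR with hs | ⟨x, y, hxy, hx, hy⟩
  · exact Or.inl hs
  · right
    rcases List.eq_nil_or_concat u with rfl | ⟨u₂, z, rfl⟩
    · exact absurd rfl hu
    rw [List.concat_eq_append] at hx hy ⊢
    have hz : (u₂ ++ [z]).getLast? = some z := List.getLast?_concat
    have hx' : (u₂ ++ [z]) ++ [x] <:+: W := by simpa using hx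
    have hy' : (u₂ ++ [z]) ++ [y] <:+: W := by simpa using hy
    have h1 := hpair z x (pair_last hz hx')
    have h2 := hpair z y (pair_last hz hy')
    rw [hz]
    rcases h1 with ⟨e1, f1⟩ | ⟨e1, f1⟩ | ⟨e1, f1⟩ | ⟨e1, f1⟩ <;>
      rcases h2 with ⟨e2, f2⟩ | ⟨e2, f2⟩ | ⟨e2, f2⟩ | ⟨e2, f2⟩ <;>
      subst_vars <;> simp_all

end Main2

theorem head?_of_prefix {u v : List α} (h : u <+: v) (hu : u ≠ []) :
    v.head? = u.head? := by
  obtain ⟨t, rfl⟩ := h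
  rw [List.head?_append, List.head?_eq_head hu]
  rfl

theorem getLast?_of_suffix {u v : List α} (h : u <:+ v) (hu : u ≠ []) :
    v.getLast? = u.getLast? := by
  obtain ⟨s, rfl⟩ := h
  rw [List.getLast?_append]
  rcases List.eq_nil_or_concat u with rfl | ⟨u₂, z, rfl⟩
  · exact absurd rfl hu
  · rw [List.concat_eq_append, List.getLast?_concat]; rfl

section Main3

set_option linter.unusedSectionVars false

variable [DecidableEq α] {a b c : α} {m : ℕ}

theorem prefix_suffix_eq_c {T u : List α} (hT : T.count c = 1) (hc : c ∈ u)
    (hp : u <+: T) (hs : u <:+ T) : u = T := by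
  obtain ⟨t, ht⟩ := hp
  obtain ⟨s, hs2⟩ := hs
  have h1 : T = [] ++ u ++ t := by simp [ht]
  have h2 : T = s ++ u ++ [] := by simp [hs2]
  obtain ⟨he, rfl⟩ := unique_occ hT hc h1 h2
  simpa using ht

theorem head?_T (hm : 1 ≤ m) :
    (abPow a b (m+1) ++ [c] ++ abPow a b m).head? = some a := by
  rw [List.append_assoc, List.head?_append, head?_abPow a b (by omega : 1 ≤ m+1)]
  rfl

theorem getLast?_T (hm : 1 ≤ m) :
    (abPow a b (m+1) ++ [c] ++ abPow a b m).getLast? = some b := by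
  rw [List.getLast?_append, getLast?_abPow a b hm]
  rfl

theorem cfree_infix_T {u : List α} (h : u <:+: abPow a b (m+1) ++ [c] ++ abPow a b m)
    (hc : c ∉ u) : u <:+: abPow a b (m+1) := by
  rcases infix_window h hc with h | h
  · exact h
  · exact h.trans (abPow_prefix a b (by omega : m ≤ m+1)).isInfix

theorem ext_A_eq_c (hbc : b ≠ c) (hac : a ≠ c) {x : α}
    (h : abPow a b (m+1) ++ [x] <:+: abPow a b (m+1) ++ [c] ++ abPow a b m) : x = c := by
  by_contra hx
  have hcf : c ∉ abPow a b (m+1) ++ [x] := by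
    intro hmem
    rcases List.mem_append.1 hmem with h' | h'
    · rcases mem_abPow h' with h' | h'
      · exact hac h'.symm
      · exact hbc h'.symm
    · simp at h'
      exact hx h'.symm
  have h2 := cfree_infix_T h hcf
  have := h2.length_le
  rw [List.length_append, abPow_length] at this
  simp at this

theorem not_rightMax_A (hbc : b ≠ c) (hac : a ≠ c) (hm : 1 ≤ m) :
    ¬ RightMaximal (abPow a b (m+1)) (abPow a b (m+1) ++ [c] ++ abPow a b m) := by
  rintro (hs | ⟨x, y, hxy, hx, hy⟩)
  · have hcg : [c] ++ abPow a b m <:+ abPow a b (m+1) ++ [c] ++ abPow a b m := by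
      rw [List.append_assoc]
      exact List.suffix_append _ _
    have hlen : ([c] ++ abPow a b m).length ≤ (abPow a b (m+1)).length := by
      rw [List.length_append, abPow_length, abPow_length]
      simp; omega
    have := List.suffix_of_suffix_length_le hcg hs hlen
    have hcm : c ∈ abPow a b (m+1) := this.mem (by simp)
    rcases mem_abPow hcm with h' | h'
    · exact hac h'.symm
    · exact hbc h'.symm
  · exact hxy ((ext_A_eq_c hbc hac hx).trans (ext_A_eq_c hbc hac hy).symm)

/-- Classification of maximal substrings of `T`. -/
theorem classifyT (hab : a ≠ b) (hbc : b ≠ c) (hac : a ≠ c) (hm : 1 ≤ m) {u : List α}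
    (hinf : u <:+: abPow a b (m+1) ++ [c] ++ abPow a b m)
    (hmax : MaximalSubstr u (abPow a b (m+1) ++ [c] ++ abPow a b m)) :
    u = abPow a b (m+1) ++ [c] ++ abPow a b m ∨ ∃ k, k ≤ m ∧ u = abPow a b k := by
  obtain ⟨hL, hR⟩ := hmax
  rcases eq_or_ne u [] with rfl | hne
  · exact Or.inr ⟨0, by omega, rfl⟩
  by_cases hcu : c ∈ u
  · left
    have hcnt := countT (a := a) (b := b) (m := m) hbc hac
    have hs : u <:+ abPow a b (m+1) ++ [c] ++ abPow a b m := by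
      rcases hR with h | ⟨x, y, hxy, hx, hy⟩
      · exact h
      · exact absurd (right_ext_unique hcnt hcu hx hy) hxy
    have hp : u <+: abPow a b (m+1) ++ [c] ++ abPow a b m := by
      rcases hL with h | ⟨x, y, hxy, hx, hy⟩
      · exact h
      · exact absurd (left_ext_unique hcnt hcu hx hy) hxy
    exact prefix_suffix_eq_c hcnt hcu hp hs
  · right
    have hpair : ∀ x y : α, [x, y] <:+: abPow a b (m+1) ++ [c] ++ abPow a b m →
        (x = a ∧ y = b) ∨ (x = b ∧ y = a) ∨ (x = b ∧ y = c) ∨ (x = c ∧ y = a) :=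
      fun x y h => pairT hm h
    have hh : u.head? = some a := by
      rcases leftMax_head hab hbc hac hpair hne hL with hp | hh
      · rw [← head?_of_prefix hp hne, head?_T hm]
      · exact hh
    have hl : u.getLast? = some b := by
      rcases rightMax_last hab hbc hac hpair hne hR with hs | hl
      · rw [← getLast?_of_suffix hs hne, getLast?_T hm]
      · exact hl
    have hA : u <:+: abPow a b (m+1) := cfree_infix_T hinf hcu
    obtain ⟨j, hj1, hj2, rfl⟩ := infix_abPow_form hab hA hne hh hl
    rcases Nat.lt_or_ge j (m+1) with hj | hj
    · exact ⟨j, by omega, rfl⟩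
    · have hj' : j = m + 1 := by omega
      subst hj'
      exact absurd hR (not_rightMax_A hbc hac hm)

end Main3

section Main4

set_option linter.unusedSectionVars false

variable [DecidableEq α] {a b c : α} {m : ℕ}

theorem T'_infix_T :
    (b :: abPow a b m) ++ [c] ++ abPow a b m <:+:
      abPow a b (m+1) ++ [c] ++ abPow a b m := by
  refine ⟨[a], [], ?_⟩
  rw [abPow_succ]
  simp

theorem pairT' (hm : 1 ≤ m) {x y : α}
    (h : [x, y] <:+: (b :: abPow a b m) ++ [c] ++ abPow a b m) :
    (x = a ∧ y = b) ∨ (x = b ∧ y = a) ∨ (x = b ∧ y = c) ∨ (x = c ∧ y = a) :=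
  pairT hm (h.trans T'_infix_T)

theorem head?_T' :
    ((b :: abPow a b m) ++ [c] ++ abPow a b m).head? = some b := rfl

theorem getLast?_T' (hm : 1 ≤ m) :
    ((b :: abPow a b m) ++ [c] ++ abPow a b m).getLast? = some b := by
  rw [List.getLast?_append, getLast?_abPow a b hm]
  rfl

theorem F_infix_A : (b :: abPow a b m) <:+: abPow a b (m+1) := by
  rw [abPow_succ]
  exact (List.suffix_cons a _).isInfix

theorem cfree_infix_T' {u : List α}
    (h : u <:+: (b :: abPow a b m) ++ [c] ++ abPow a b m) (hc : c ∉ u) :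
    u <:+: abPow a b (m+1) := by
  rcases infix_window h hc with h | h
  · exact h.trans F_infix_A
  · exact h.trans (abPow_prefix a b (by omega : m ≤ m+1)).isInfix

theorem cfree_length_T' {u : List α}
    (h : u <:+: (b :: abPow a b m) ++ [c] ++ abPow a b m) (hc : c ∉ u) :
    u.length ≤ 2 * m + 1 := by
  rcases infix_window h hc with h | h
  · have := h.length_le
    simp only [List.length_cons, abPow_length] at this
    omega
  · have := h.length_le
    rw [abPow_length] at this
    omega

theorem ext_F_eq_c (hbc : b ≠ c) (hac : a ≠ c) {x : α}
    (h : (b :: abPow a b m) ++ [x] <:+: (b :: abPow a b m) ++ [c] ++ abPow a b m) :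
    x = c := by
  by_contra hx
  have hcf : c ∉ (b :: abPow a b m) ++ [x] := by
    intro hmem
    rcases List.mem_append.1 hmem with h' | h'
    · rcases List.mem_cons.1 h' with h' | h'
      · exact hbc h'.symm
      · rcases mem_abPow h' with h' | h'
        · exact hac h'.symm
        · exact hbc h'.symm
    · simp at h'
      exact hx h'.symm
  have := cfree_length_T' h hcf
  simp only [List.length_append, List.length_cons, abPow_length] at this
  simp at this

theorem c_not_mem_F (hbc : b ≠ c) (hac : a ≠ c) : c ∉ (b :: abPow a b m) := by
  intro h'
  rcases List.mem_cons.1 h' with h' | h'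
  · exact hbc h'.symm
  · rcases mem_abPow h' with h' | h'
    · exact hac h'.symm
    · exact hbc h'.symm

theorem not_rightMax_F (hbc : b ≠ c) (hac : a ≠ c) (hm : 1 ≤ m) :
    ¬ RightMaximal (b :: abPow a b m) ((b :: abPow a b m) ++ [c] ++ abPow a b m) := by
  rintro (hs | ⟨x, y, hxy, hx, hy⟩)
  · have hcg : [c] ++ abPow a b m <:+ (b :: abPow a b m) ++ [c] ++ abPow a b m := by
      rw [List.append_assoc]
      exact List.suffix_append _ _
    have hlen : ([c] ++ abPow a b m).length ≤ (b :: abPow a b m).length := by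
      simp [abPow_length]
    have := List.suffix_of_suffix_length_le hcg hs hlen
    exact c_not_mem_F hbc hac (this.mem (by simp))
  · exact hxy ((ext_F_eq_c hbc hac hx).trans (ext_F_eq_c hbc hac hy).symm)

/-- Classification of maximal substrings of `T'`. -/
theorem classifyT' (hab : a ≠ b) (hbc : b ≠ c) (hac : a ≠ c) (hm : 1 ≤ m) {u : List α}
    (hinf : u <:+: (b :: abPow a b m) ++ [c] ++ abPow a b m)
    (hmax : MaximalSubstr u ((b :: abPow a b m) ++ [c] ++ abPow a b m)) :
    u = (b :: abPow a b m) ++ [c] ++ abPow a b m ∨ (∃ k, k ≤ m ∧ u = abPow a b k) ∨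
      (∃ k, k ≤ m - 1 ∧ u = b :: abPow a b k) := by
  obtain ⟨hL, hR⟩ := hmax
  rcases eq_or_ne u [] with rfl | hne
  · exact Or.inr (Or.inl ⟨0, by omega, rfl⟩)
  by_cases hcu : c ∈ u
  · left
    have hcnt := countT' (a := a) (b := b) (m := m) hbc hac
    have hs : u <:+ (b :: abPow a b m) ++ [c] ++ abPow a b m := by
      rcases hR with h | ⟨x, y, hxy, hx, hy⟩
      · exact h
      · exact absurd (right_ext_unique hcnt hcu hx hy) hxy
    have hp : u <+: (b :: abPow a b m) ++ [c] ++ abPow a b m := by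
      rcases hL with h | ⟨x, y, hxy, hx, hy⟩
      · exact h
      · exact absurd (left_ext_unique hcnt hcu hx hy) hxy
    exact prefix_suffix_eq_c hcnt hcu hp hs
  · have hpair : ∀ x y : α, [x, y] <:+: (b :: abPow a b m) ++ [c] ++ abPow a b m →
        (x = a ∧ y = b) ∨ (x = b ∧ y = a) ∨ (x = b ∧ y = c) ∨ (x = c ∧ y = a) :=
      fun x y h => pairT' hm h
    have hl : u.getLast? = some b := by
      rcases rightMax_last hab hbc hac hpair hne hR with hs | hl
      · rw [← getLast?_of_suffix hs hne, getLast?_T' hm]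
      · exact hl
    rcases leftMax_head hab hbc hac hpair hne hL with hp | hh
    · -- u is a prefix of T', hence starts with b
      right; right
      have hpF : u <+: b :: abPow a b m := prefix_window hp hcu
      rcases List.prefix_cons_iff.1 hpF with hnil | ⟨u₂, rfl, hpF₂⟩
      · exact absurd hnil hne
      rcases eq_or_ne u₂ [] with rfl | hne₂
      · exact ⟨0, by omega, rfl⟩
      · have hh₂ : u₂.head? = some a := by
          rw [← head?_of_prefix hpF₂ hne₂, head?_abPow a b hm]
        have hl₂ : u₂.getLast? = some b := by
          rw [show (b :: u₂) = [b] ++ u₂ from rfl, List.getLast?_append] at hl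
          rcases List.eq_nil_or_concat u₂ with rfl | ⟨u₃, z, rfl⟩
          · exact absurd rfl hne₂
          · rw [List.concat_eq_append, List.getLast?_concat] at hl ⊢
            simpa using hl
        obtain ⟨j, hj1, hj2, rfl⟩ := infix_abPow_form hab hpF₂.isInfix hne₂ hh₂ hl₂
        rcases Nat.lt_or_ge j m with hj | hj
        · exact ⟨j, by omega, rfl⟩
        · have hj' : j = m := by omega
          subst hj'
          exact absurd hR (not_rightMax_F hbc hac hm)
    · -- u starts with a
      right; left
      have hA : u <:+: abPow a b (m+1) := cfree_infix_T' hinf hcu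
      obtain ⟨j, hj1, hj2, rfl⟩ := infix_abPow_form hab hA hne hh hl
      have hlen := cfree_length_T' hinf hcu
      rw [abPow_length] at hlen
      exact ⟨j, by omega, rfl⟩

end Main4

theorem suffix_append_right {u v w : List α} (h : u <:+ v) : u ++ w <:+ v ++ w := by
  obtain ⟨s, rfl⟩ := h
  exact ⟨s, by simp⟩

section Main5

set_option linter.unusedSectionVars false

variable [DecidableEq α] {a b c : α} {m : ℕ}

theorem bab_eq (a b : α) (k : ℕ) : b :: abPow a b k = abPow b a k ++ [b] := by
  induction k with
  | zero => rfl
  | succ k ih =>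
    rw [abPow_succ, abPow_succ]
    rw [show b :: a :: b :: abPow a b k = [b, a] ++ (b :: abPow a b k) from rfl, ih]
    rfl

theorem getLast?_bab (a b : α) (k : ℕ) : (b :: abPow a b k).getLast? = some b := by
  rw [bab_eq, List.getLast?_concat]

theorem mem_a_abPow {k : ℕ} (hk : 1 ≤ k) : a ∈ abPow a b k := by
  obtain ⟨d, rfl⟩ := Nat.exists_eq_add_of_le hk
  rw [Nat.add_comm, abPow_succ]; simp

theorem mem_b_abPow {k : ℕ} (hk : 1 ≤ k) : b ∈ abPow a b k := by
  obtain ⟨d, rfl⟩ := Nat.exists_eq_add_of_le hk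
  rw [Nat.add_comm, abPow_succ]; simp

-- abbreviate the two words
theorem abPow_concat_a_prefix {k j : ℕ} (h : k + 1 ≤ j) :
    abPow a b k ++ [a] <+: abPow a b j := by
  have h1 : abPow a b k ++ [a] <+: abPow a b (k+1) := by
    rw [abPow_concat]
    exact ⟨[b], by simp⟩
  exact h1.trans (abPow_prefix a b h)

/-! Facts about `T = abPow a b (m+1) ++ [c] ++ abPow a b m`. -/

theorem abPow_prefix_T {k : ℕ} (hk : k ≤ m + 1) :
    abPow a b k <+: abPow a b (m+1) ++ [c] ++ abPow a b m := by
  rw [List.append_assoc]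
  exact (abPow_prefix a b hk).trans (List.prefix_append _ _)

theorem ext_a_T {k : ℕ} (hk : k ≤ m) :
    abPow a b k ++ [a] <:+: abPow a b (m+1) ++ [c] ++ abPow a b m := by
  have h1 : abPow a b k ++ [a] <+: abPow a b (m+1) := abPow_concat_a_prefix (by omega)
  rw [List.append_assoc]
  exact (h1.trans (List.prefix_append _ _)).isInfix

theorem ext_c_T {k : ℕ} (hk : k ≤ m + 1) :
    abPow a b k ++ [c] <:+: abPow a b (m+1) ++ [c] ++ abPow a b m := by
  have h1 : abPow a b k ++ [c] <:+ abPow a b (m+1) ++ [c] :=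
    suffix_append_right (abPow_suffix a b hk)
  exact h1.isInfix.trans (List.prefix_append _ _).isInfix

theorem maximal_abPow_T (hac : a ≠ c) {k : ℕ} (hk : k ≤ m) :
    MaximalSubstr (abPow a b k) (abPow a b (m+1) ++ [c] ++ abPow a b m) := by
  constructor
  · exact Or.inl (abPow_prefix_T (by omega))
  · exact Or.inr ⟨a, c, hac, ext_a_T hk, ext_c_T (by omega)⟩

theorem maximal_self {W : List α} : MaximalSubstr W W :=
  ⟨Or.inl (List.prefix_refl _), Or.inl (List.suffix_refl _)⟩

theorem T_length : (abPow a b (m+1) ++ [c] ++ abPow a b m).length = 4 * m + 3 := by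
  simp [abPow_length]; omega

theorem T'_length : ((b :: abPow a b m) ++ [c] ++ abPow a b m).length = 4 * m + 2 := by
  simp [abPow_length]; omega

theorem mem_toFinset_T (hm : 1 ≤ m) :
    (abPow a b (m+1) ++ [c] ++ abPow a b m).toFinset = {a, b, c} := by
  ext x
  simp only [List.toFinset_append, Finset.mem_union, List.mem_toFinset,
    Finset.mem_insert, Finset.mem_singleton]
  constructor
  · rintro ((h | h) | h)
    · rcases mem_abPow h with rfl | rfl
      · exact Or.inl rfl
      · exact Or.inr (Or.inl rfl)
    · simp at h; exact Or.inr (Or.inr h)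
    · rcases mem_abPow h with rfl | rfl
      · exact Or.inl rfl
      · exact Or.inr (Or.inl rfl)
  · rintro (rfl | rfl | rfl)
    · exact Or.inl (Or.inl (mem_a_abPow (by omega)))
    · exact Or.inl (Or.inl (mem_b_abPow (by omega)))
    · exact Or.inl (Or.inr (by simp))

theorem mem_toFinset_T' (hm : 1 ≤ m) :
    ((b :: abPow a b m) ++ [c] ++ abPow a b m).toFinset = {a, b, c} := by
  ext x
  simp only [List.toFinset_append, Finset.mem_union, List.mem_toFinset,
    Finset.mem_insert, Finset.mem_singleton, List.mem_cons]
  constructor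
  · rintro ((h | h) | h)
    · rcases h with rfl | h
      · exact Or.inr (Or.inl rfl)
      · rcases mem_abPow h with rfl | rfl
        · exact Or.inl rfl
        · exact Or.inr (Or.inl rfl)
    · simp at h; exact Or.inr (Or.inr h)
    · rcases mem_abPow h with rfl | rfl
      · exact Or.inl rfl
      · exact Or.inr (Or.inl rfl)
  · rintro (rfl | rfl | rfl)
    · exact Or.inl (Or.inl (Or.inr (mem_a_abPow hm)))
    · exact Or.inl (Or.inl (Or.inl rfl))
    · exact Or.inl (Or.inr (by simp))

theorem card_abc (hab : a ≠ b) (hbc : b ≠ c) (hac : a ≠ c) :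
    ({a, b, c} : Finset α).card = 3 := by
  rw [Finset.card_insert_of_notMem (by simp [hab, hac]),
    Finset.card_insert_of_notMem (by simp [hbc])]
  simp

theorem D_nil {W : List α} (hW : W ≠ []) : D W [] = W.toFinset.card := by
  rw [D, if_neg (Ne.symm hW)]
  congr 1
  apply Finset.filter_true_of_mem
  intro x hx
  obtain ⟨s, t, rfl⟩ := List.append_of_mem (List.mem_toFinset.1 hx)
  exact ⟨s, t, by simp⟩

theorem D_T_nil (hab : a ≠ b) (hbc : b ≠ c) (hac : a ≠ c) (hm : 1 ≤ m) :
    D (abPow a b (m+1) ++ [c] ++ abPow a b m) [] = 3 := by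
  rw [D_nil, mem_toFinset_T hm, card_abc hab hbc hac]
  intro h
  have := congrArg List.length h
  rw [T_length] at this
  simp at this

theorem D_T'_nil (hab : a ≠ b) (hbc : b ≠ c) (hac : a ≠ c) (hm : 1 ≤ m) :
    D ((b :: abPow a b m) ++ [c] ++ abPow a b m) [] = 3 := by
  rw [D_nil, mem_toFinset_T' hm, card_abc hab hbc hac]
  intro h
  have := congrArg List.length h
  rw [T'_length] at this
  simp at this

end Main5

section Main6

set_option linter.unusedSectionVars false

variable [DecidableEq α] {a b c : α} {m : ℕ}

theorem F_prefix_T' : (b :: abPow a b m) <+: (b :: abPow a b m) ++ [c] ++ abPow a b m := by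
  rw [List.append_assoc]; exact List.prefix_append _ _

theorem G_suffix_T' : abPow a b m <:+ (b :: abPow a b m) ++ [c] ++ abPow a b m :=
  List.suffix_append _ _

theorem cG_suffix_T' : [c] ++ abPow a b m <:+ (b :: abPow a b m) ++ [c] ++ abPow a b m := by
  rw [List.append_assoc]; exact List.suffix_append _ _

theorem abPow_infix_T' {k : ℕ} (hk : k ≤ m) :
    abPow a b k <:+: (b :: abPow a b m) ++ [c] ++ abPow a b m :=
  (abPow_prefix a b hk).isInfix.trans G_suffix_T'.isInfix

theorem bab_prefix_T' {k : ℕ} (hk : k ≤ m) :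
    b :: abPow a b k <+: (b :: abPow a b m) ++ [c] ++ abPow a b m :=
  (List.cons_prefix_cons.2 ⟨rfl, abPow_prefix a b hk⟩).trans F_prefix_T'

theorem ext'_a_T' {k : ℕ} (hk : k + 1 ≤ m) :
    abPow a b k ++ [a] <:+: (b :: abPow a b m) ++ [c] ++ abPow a b m :=
  (abPow_concat_a_prefix hk).isInfix.trans G_suffix_T'.isInfix

theorem ext'_c_T' {k : ℕ} (hk : k ≤ m) :
    abPow a b k ++ [c] <:+: (b :: abPow a b m) ++ [c] ++ abPow a b m := by
  have h1 : abPow a b k ++ [c] <:+ (b :: abPow a b m) ++ [c] :=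
    suffix_append_right ((abPow_suffix a b hk).trans (List.suffix_cons b _))
  exact h1.isInfix.trans (List.prefix_append _ _).isInfix

theorem ext_bab_a_T' {k : ℕ} (hk : k + 1 ≤ m) :
    (b :: abPow a b k) ++ [a] <:+: (b :: abPow a b m) ++ [c] ++ abPow a b m := by
  have h1 : (b :: abPow a b k) ++ [a] <+: b :: abPow a b m := by
    rw [List.cons_append, List.cons_prefix_cons]
    exact ⟨rfl, abPow_concat_a_prefix hk⟩
  exact (h1.trans F_prefix_T').isInfix

theorem ext_bab_c_T' {k : ℕ} (hk : k ≤ m) :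
    (b :: abPow a b k) ++ [c] <:+: (b :: abPow a b m) ++ [c] ++ abPow a b m := by
  have h1 : (b :: abPow a b k) ++ [c] <:+ (b :: abPow a b m) ++ [c] := by
    rw [bab_eq a b k, bab_eq a b m]
    exact suffix_append_right (suffix_append_right (abPow_suffix b a hk))
  exact h1.isInfix.trans (List.prefix_append _ _).isInfix

theorem maximal_abPow_T' (hbc : b ≠ c) (hac : a ≠ c) (hm : 1 ≤ m) {k : ℕ} (hk : k ≤ m) :
    MaximalSubstr (abPow a b k) ((b :: abPow a b m) ++ [c] ++ abPow a b m) := by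
  constructor
  · refine Or.inr ⟨b, c, hbc, ?_, ?_⟩
    · exact (bab_prefix_T' hk).isInfix
    · have h1 : c :: abPow a b k <+: [c] ++ abPow a b m :=
        List.cons_prefix_cons.2 ⟨rfl, abPow_prefix a b hk⟩
      exact h1.isInfix.trans cG_suffix_T'.isInfix
  · rcases Nat.lt_or_ge k m with hkm | hkm
    · exact Or.inr ⟨a, c, hac, ext'_a_T' hkm, ext'_c_T' hk⟩
    · have : k = m := by omega
      subst this
      exact Or.inl G_suffix_T'

theorem maximal_bab_T' (hac : a ≠ c) {k : ℕ} (hk : k + 1 ≤ m) :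
    MaximalSubstr (b :: abPow a b k) ((b :: abPow a b m) ++ [c] ++ abPow a b m) := by
  constructor
  · exact Or.inl (bab_prefix_T' (by omega))
  · exact Or.inr ⟨a, c, hac, ext_bab_a_T' hk, ext_bab_c_T' (by omega)⟩

theorem not_ext_aG (hab : a ≠ b) (hbc : b ≠ c) (hac : a ≠ c) (hm : 1 ≤ m) :
    ¬ (abPow a b m ++ [a] <:+: (b :: abPow a b m) ++ [c] ++ abPow a b m) := by
  intro h
  have hcf : c ∉ abPow a b m ++ [a] := by
    intro hmem
    rcases List.mem_append.1 hmem with h' | h'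
    · rcases mem_abPow h' with h' | h'
      · exact hac h'.symm
      · exact hbc h'.symm
    · simp at h'; exact hac h'.symm
  rcases infix_window h hcf with h' | h'
  · have hlen : (abPow a b m ++ [a]).length = (b :: abPow a b m).length := by
      simp [abPow_length]
    have heq := h'.eq_of_length hlen
    have := congrArg List.head? heq
    rw [List.head?_append, head?_abPow a b hm] at this
    simp at this
    exact hab this
  · have := h'.length_le
    simp [abPow_length] at this
end Main6

section Main7

set_option linter.unusedSectionVars false

variable [DecidableEq α] {a b c : α} {m : ℕ}

theorem D_self {W : List α} : D W W = 0 := by rw [D, if_pos rfl]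

theorem abPow_ne_T {k : ℕ} (hk : k ≤ m) :
    abPow a b k ≠ abPow a b (m+1) ++ [c] ++ abPow a b m := by
  intro h
  have := congrArg List.length h
  rw [abPow_length, T_length] at this
  omega

theorem abPow_ne_T' {k : ℕ} (hk : k ≤ m) :
    abPow a b k ≠ (b :: abPow a b m) ++ [c] ++ abPow a b m := by
  intro h
  have := congrArg List.length h
  rw [abPow_length, T'_length] at this
  omega

theorem bab_ne_T' {k : ℕ} (hk : k + 1 ≤ m) :
    b :: abPow a b k ≠ (b :: abPow a b m) ++ [c] ++ abPow a b m := by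
  intro h
  have := congrArg List.length h
  rw [List.length_cons, abPow_length, T'_length] at this
  omega

theorem card_ac (hac : a ≠ c) : ({a, c} : Finset α).card = 2 := by
  rw [Finset.card_insert_of_notMem (by simp [hac])]
  simp

theorem D_T_abPow (hab : a ≠ b) (hbc : b ≠ c) (hac : a ≠ c) (hm : 1 ≤ m)
    {k : ℕ} (hk1 : 1 ≤ k) (hk2 : k ≤ m) :
    D (abPow a b (m+1) ++ [c] ++ abPow a b m) (abPow a b k) = 2 := by
  rw [D, if_neg (abPow_ne_T hk2)]
  have hset : (abPow a b (m+1) ++ [c] ++ abPow a b m).toFinset.filter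
      (fun y => (abPow a b k ++ [y]) <:+: abPow a b (m+1) ++ [c] ++ abPow a b m)
      = {a, c} := by
    ext y
    simp only [Finset.mem_filter, Finset.mem_insert, Finset.mem_singleton]
    constructor
    · rintro ⟨hy, hinf⟩
      rcases pairT hm (pair_last (getLast?_abPow a b hk1) hinf) with
        ⟨h1, h2⟩ | ⟨h1, h2⟩ | ⟨h1, h2⟩ | ⟨h1, h2⟩
      · exact absurd h1 (Ne.symm hab)
      · exact Or.inl h2
      · exact Or.inr h2
      · exact absurd h1 hbc
    · rintro (rfl | rfl)
      · exact ⟨by rw [mem_toFinset_T hm]; simp, ext_a_T hk2⟩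
      · exact ⟨by rw [mem_toFinset_T hm]; simp, ext_c_T (by omega)⟩
  rw [hset, card_ac hac]

theorem D_T'_abPow_lt (hab : a ≠ b) (hbc : b ≠ c) (hac : a ≠ c) (hm : 1 ≤ m)
    {k : ℕ} (hk1 : 1 ≤ k) (hk2 : k < m) :
    D ((b :: abPow a b m) ++ [c] ++ abPow a b m) (abPow a b k) = 2 := by
  rw [D, if_neg (abPow_ne_T' (by omega))]
  have hset : ((b :: abPow a b m) ++ [c] ++ abPow a b m).toFinset.filter
      (fun y => (abPow a b k ++ [y]) <:+: (b :: abPow a b m) ++ [c] ++ abPow a b m)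
      = {a, c} := by
    ext y
    simp only [Finset.mem_filter, Finset.mem_insert, Finset.mem_singleton]
    constructor
    · rintro ⟨hy, hinf⟩
      rcases pairT' hm (pair_last (getLast?_abPow a b hk1) hinf) with
        ⟨h1, h2⟩ | ⟨h1, h2⟩ | ⟨h1, h2⟩ | ⟨h1, h2⟩
      · exact absurd h1 (Ne.symm hab)
      · exact Or.inl h2
      · exact Or.inr h2
      · exact absurd h1 hbc
    · rintro (rfl | rfl)
      · exact ⟨by rw [mem_toFinset_T' hm]; simp, ext'_a_T' hk2⟩
      · exact ⟨by rw [mem_toFinset_T' hm]; simp, ext'_c_T' (by omega)⟩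
  rw [hset, card_ac hac]

theorem D_T'_abPow_m (hab : a ≠ b) (hbc : b ≠ c) (hac : a ≠ c) (hm : 1 ≤ m) :
    D ((b :: abPow a b m) ++ [c] ++ abPow a b m) (abPow a b m) = 1 := by
  rw [D, if_neg (abPow_ne_T' (by omega))]
  have hset : ((b :: abPow a b m) ++ [c] ++ abPow a b m).toFinset.filter
      (fun y => (abPow a b m ++ [y]) <:+: (b :: abPow a b m) ++ [c] ++ abPow a b m)
      = {c} := by
    ext y
    simp only [Finset.mem_filter, Finset.mem_singleton]
    constructor
    · rintro ⟨hy, hinf⟩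
      rcases pairT' hm (pair_last (getLast?_abPow a b hm) hinf) with
        ⟨h1, h2⟩ | ⟨h1, h2⟩ | ⟨h1, h2⟩ | ⟨h1, h2⟩
      · exact absurd h1 (Ne.symm hab)
      · subst h2; exact absurd hinf (not_ext_aG hab hbc hac hm)
      · exact h2
      · exact absurd h1 hbc
    · rintro rfl
      exact ⟨by rw [mem_toFinset_T' hm]; simp, ext'_c_T' (by omega)⟩
  rw [hset, Finset.card_singleton]

theorem D_T'_bab (hab : a ≠ b) (hbc : b ≠ c) (hac : a ≠ c) (hm : 1 ≤ m)
    {k : ℕ} (hk : k + 1 ≤ m) :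
    D ((b :: abPow a b m) ++ [c] ++ abPow a b m) (b :: abPow a b k) = 2 := by
  rw [D, if_neg (bab_ne_T' hk)]
  have hset : ((b :: abPow a b m) ++ [c] ++ abPow a b m).toFinset.filter
      (fun y => ((b :: abPow a b k) ++ [y]) <:+: (b :: abPow a b m) ++ [c] ++ abPow a b m)
      = {a, c} := by
    ext y
    simp only [Finset.mem_filter, Finset.mem_insert, Finset.mem_singleton]
    constructor
    · rintro ⟨hy, hinf⟩
      rcases pairT' hm (pair_last (getLast?_bab a b k) hinf) with
        ⟨h1, h2⟩ | ⟨h1, h2⟩ | ⟨h1, h2⟩ | ⟨h1, h2⟩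
      · exact absurd h1 (Ne.symm hab)
      · exact Or.inl h2
      · exact Or.inr h2
      · exact absurd h1 hbc
    · rintro (rfl | rfl)
      · exact ⟨by rw [mem_toFinset_T' hm]; simp, ext_bab_a_T' hk⟩
      · exact ⟨by rw [mem_toFinset_T' hm]; simp, ext_bab_c_T' (by omega)⟩
  rw [hset, card_ac hac]

end Main7

section Main8

set_option linter.unusedSectionVars false

variable [DecidableEq α] {a b c : α} {m : ℕ}

theorem mem_cdawg_filter {W x : List α} {inst : DecidablePred fun x => x <:+: W ∧ MaximalSubstr x W} :
    x ∈ @Finset.filter _ (fun x => x <:+: W ∧ MaximalSubstr x W) inst W.sublists.toFinset ↔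
      (x <:+: W ∧ MaximalSubstr x W) := by
  simp only [Finset.mem_filter, List.mem_toFinset, List.mem_sublists]
  exact ⟨fun h => h.2, fun h => ⟨h.1.sublist, h⟩⟩

theorem cdawg_T (hab : a ≠ b) (hbc : b ≠ c) (hac : a ≠ c) (hm : 1 ≤ m) :
    cdawgSize (abPow a b (m+1) ++ [c] ++ abPow a b m) = 2 * m + 3 := by
  classical
  rw [cdawgSize]
  have hfe : (abPow a b (m+1) ++ [c] ++ abPow a b m).sublists.toFinset.filter
      (fun x => x <:+: abPow a b (m+1) ++ [c] ++ abPow a b m ∧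
        MaximalSubstr x (abPow a b (m+1) ++ [c] ++ abPow a b m)) =
      insert (abPow a b (m+1) ++ [c] ++ abPow a b m)
        ((Finset.range (m+1)).image (abPow a b)) := by
    ext x
    rw [mem_cdawg_filter]
    simp only [Finset.mem_insert, Finset.mem_image, Finset.mem_range]
    constructor
    · rintro ⟨hinf, hmax⟩
      rcases classifyT hab hbc hac hm hinf hmax with h | ⟨k, hk, rfl⟩
      · exact Or.inl h
      · exact Or.inr ⟨k, by omega, rfl⟩
    · rintro (rfl | ⟨k, hk, rfl⟩)
      · exact ⟨List.infix_refl _, maximal_self⟩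
      · exact ⟨(abPow_prefix_T (by omega)).isInfix, maximal_abPow_T hac (by omega)⟩
  rw [hfe]
  have hnot : (abPow a b (m+1) ++ [c] ++ abPow a b m) ∉
      (Finset.range (m+1)).image (abPow a b) := by
    intro h
    obtain ⟨k, hk, he⟩ := Finset.mem_image.1 h
    have := congrArg List.length he
    rw [abPow_length, T_length] at this
    omega
  rw [Finset.sum_insert hnot, D_self, Finset.sum_image
    (fun x _ y _ he => by
      have := congrArg List.length he
      rw [abPow_length, abPow_length] at this
      omega)]
  rw [Finset.sum_range_succ']
  have h0 : D (abPow a b (m+1) ++ [c] ++ abPow a b m) (abPow a b 0) = 3 :=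
    D_T_nil hab hbc hac hm
  have h2 : ∀ k ∈ Finset.range m,
      D (abPow a b (m+1) ++ [c] ++ abPow a b m) (abPow a b (k+1)) = 2 := by
    intro k hk
    rw [Finset.mem_range] at hk
    exact D_T_abPow hab hbc hac hm (by omega) (by omega)
  rw [Finset.sum_congr rfl h2, h0, Finset.sum_const, Finset.card_range]
  simp only [smul_eq_mul]
  omega

theorem cdawg_T' (hab : a ≠ b) (hbc : b ≠ c) (hac : a ≠ c) (hm : 1 ≤ m) :
    cdawgSize ((b :: abPow a b m) ++ [c] ++ abPow a b m) = 4 * m + 2 := by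
  classical
  obtain ⟨n, rfl⟩ : ∃ n, m = n + 1 := ⟨m - 1, by omega⟩
  rw [cdawgSize]
  set W := (b :: abPow a b (n+1)) ++ [c] ++ abPow a b (n+1) with hW
  have hfe : W.sublists.toFinset.filter
      (fun x => x <:+: W ∧ MaximalSubstr x W) =
      insert W (((Finset.range (n+2)).image (abPow a b)) ∪
        ((Finset.range (n+1)).image (fun k => b :: abPow a b k))) := by
    ext x
    rw [mem_cdawg_filter]
    simp only [Finset.mem_insert, Finset.mem_union, Finset.mem_image, Finset.mem_range]
    constructor
    · rintro ⟨hinf, hmax⟩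
      rcases classifyT' hab hbc hac hm hinf hmax with h | ⟨k, hk, rfl⟩ | ⟨k, hk, rfl⟩
      · exact Or.inl h
      · exact Or.inr (Or.inl ⟨k, by omega, rfl⟩)
      · exact Or.inr (Or.inr ⟨k, by omega, rfl⟩)
    · rintro (rfl | ⟨k, hk, rfl⟩ | ⟨k, hk, rfl⟩)
      · exact ⟨List.infix_refl _, maximal_self⟩
      · exact ⟨abPow_infix_T' (by omega), maximal_abPow_T' hbc hac hm (by omega)⟩
      · exact ⟨(bab_prefix_T' (by omega)).isInfix, maximal_bab_T' hac (by omega)⟩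
  rw [hfe]
  have hnot : W ∉ ((Finset.range (n+2)).image (abPow a b)) ∪
      ((Finset.range (n+1)).image (fun k => b :: abPow a b k)) := by
    intro h
    rcases Finset.mem_union.1 h with h | h
    · obtain ⟨k, hk, he⟩ := Finset.mem_image.1 h
      have := congrArg List.length he
      rw [abPow_length, T'_length] at this
      rw [Finset.mem_range] at hk
      omega
    · obtain ⟨k, hk, he⟩ := Finset.mem_image.1 h
      have := congrArg List.length he
      rw [List.length_cons, abPow_length, T'_length] at this
      rw [Finset.mem_range] at hk
      omega
  have hdisj : Disjoint ((Finset.range (n+2)).image (abPow a b))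
      ((Finset.range (n+1)).image (fun k => b :: abPow a b k)) := by
    rw [Finset.disjoint_left]
    intro x h1 h2
    obtain ⟨j, _, he1⟩ := Finset.mem_image.1 h1
    obtain ⟨k, _, he2⟩ := Finset.mem_image.1 h2
    have := congrArg List.length (he1.trans he2.symm)
    rw [abPow_length, List.length_cons, abPow_length] at this
    omega
  rw [Finset.sum_insert hnot, D_self, Finset.sum_union hdisj]
  rw [Finset.sum_image (fun x _ y _ he => by
      have := congrArg List.length he
      rw [abPow_length, abPow_length] at this
      omega),
    Finset.sum_image (fun x _ y _ he => by
      have := congrArg List.length he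
      rw [List.length_cons, abPow_length, List.length_cons, abPow_length] at this
      omega)]
  have hsum1 : ∑ k ∈ Finset.range (n+2), D W (abPow a b k) = 2 * n + 4 := by
    rw [Finset.sum_range_succ, Finset.sum_range_succ']
    have h0 : D W (abPow a b 0) = 3 := D_T'_nil hab hbc hac hm
    have hm' : D W (abPow a b (n+1)) = 1 := D_T'_abPow_m hab hbc hac hm
    have h2 : ∀ k ∈ Finset.range n, D W (abPow a b (k+1)) = 2 := by
      intro k hk
      rw [Finset.mem_range] at hk
      exact D_T'_abPow_lt hab hbc hac hm (by omega) (by omega)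
    rw [Finset.sum_congr rfl h2, h0, hm', Finset.sum_const, Finset.card_range]
    simp only [smul_eq_mul]
    omega
  have hsum2 : ∑ k ∈ Finset.range (n+1), D W (b :: abPow a b k) = 2 * n + 2 := by
    have h2 : ∀ k ∈ Finset.range (n+1), D W (b :: abPow a b k) = 2 := by
      intro k hk
      rw [Finset.mem_range] at hk
      exact D_T'_bab hab hbc hac hm (by omega)
    rw [Finset.sum_congr rfl h2, Finset.sum_const, Finset.card_range]
    simp only [smul_eq_mul]
    omega
  rw [hsum1, hsum2]
  omega

end Main8

theorem drop_one_T {α : Type*} (a b c : α) (m : ℕ) :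
    (abPow a b (m + 1) ++ [c] ++ abPow a b m).drop 1 =
      (b :: abPow a b m) ++ [c] ++ abPow a b m := by
  rw [abPow_succ]
  rfl

end Stmt17

/-- Theorem 4, lower bound for left-end deletion: for
`T = (ab)^(m+1) c (ab)^m` and `T'` obtained from `T` by deleting its first
character, `e(T) = 2m + 3` and `e(T') = 4m + 2`, hence
`e(T') - e(T) = e(T) - 4`. -/
theorem stmt17 {α : Type*} [DecidableEq α] (a b c : α) (hab : a ≠ b)
    (hbc : b ≠ c) (hac : a ≠ c) (m : ℕ) (hm : 1 ≤ m) :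
    cdawgSize (abPow a b (m + 1) ++ [c] ++ abPow a b m) = 2 * m + 3 ∧
    cdawgSize ((abPow a b (m + 1) ++ [c] ++ abPow a b m).drop 1) = 4 * m + 2 ∧
    cdawgSize ((abPow a b (m + 1) ++ [c] ++ abPow a b m).drop 1) -
        cdawgSize (abPow a b (m + 1) ++ [c] ++ abPow a b m) =
      cdawgSize (abPow a b (m + 1) ++ [c] ++ abPow a b m) - 4 := by
  have h1 := Stmt17.cdawg_T hab hbc hac hm
  have h2 := Stmt17.cdawg_T' hab hbc hac hm
  rw [Stmt17.drop_one_T]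
  exact ⟨h1, h2, by rw [h1, h2]; omega⟩
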